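/- For the system T·x' + x = u with x(0)=0 and output y = a·ReLU(cu − x + b), if the stimulus is withheld (u ≡ 0) after k stimulation periods leaving state x(kT₀) = x_k > 0, then x(t) = x_k·e^{−(t−kT₀)/T} decays to 0, and for any ε > 0 there exists m ∈ ℕ such that after withholding for m periods the response to a renewed stimulus of amplitude A satisfies y[k+m+1] ≥ a·ReLU(cA + b) − ε; in particular if cA + b > 0 and y[k] < a(cA + b) then there exists m with y[k+m+1] > y[k]. -/

import Mathlib

open Real Filter Set

/-- Hallmark H2 (spontaneous recovery): withholding the stimulus after `k`
periods, the memory decays as `x(t) = x_k e^{−(t−kT₀)/T} → 0`, so the response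
to a renewed stimulus approaches the rested response `a·ReLU(cA + b)`; in
particular, it eventually exceeds the habituated response `y[k]`. -/
theorem spontaneous_recovery
    (a c b A T T₀ : ℝ) (ha : 0 < a) (hc : 0 < c) (hA : 0 < A)
    (hT : 0 < T) (hT₀ : 0 < T₀)
    (k : ℕ) (xk : ℝ) (hxk : 0 < xk)
    (x : ℝ → ℝ)
    (hinit : x ((k : ℝ) * T₀) = xk)
    (hcont : ContinuousOn x (Ici ((k : ℝ) * T₀)))
    -- stimulus withheld: `T x' + x = 0` after time `kT₀`
    (hode : ∀ t, (k : ℝ) * T₀ < t → HasDerivAt x (-(x t) / T) t)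
    -- peak response to a renewed stimulus after withholding for `m` periods
    (resp : ℕ → ℝ)
    (hresp : ∀ m : ℕ, resp m = a * max 0 (c * A - x (((k : ℝ) + (m : ℝ) + 1) * T₀) + b))
    (yk : ℝ) :
    (∀ t, (k : ℝ) * T₀ ≤ t → x t = xk * exp (-(t - (k : ℝ) * T₀) / T)) ∧
    Tendsto x atTop (nhds 0) ∧
    (∀ ε : ℝ, 0 < ε → ∃ m : ℕ, a * max 0 (c * A + b) - ε ≤ resp m) ∧
    (0 < c * A + b → yk < a * (c * A + b) → ∃ m : ℕ, yk < resp m) := by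
  set s : ℝ := (k : ℝ) * T₀ with hs
  -- integrating factor
  set g : ℝ → ℝ := fun u => x u * exp ((u - s) / T) with hg
  have hgderiv : ∀ v, s < v → HasDerivAt g 0 v := by
    intro v hv
    have h1 : HasDerivAt (fun u : ℝ => exp ((u - s) / T)) (exp ((v - s) / T) * (1 / T)) v := by
      have : HasDerivAt (fun u : ℝ => (u - s) / T) (1 / T) v := by
        simpa using ((hasDerivAt_id v).sub_const s).div_const T
      exact (Real.hasDerivAt_exp ((v - s) / T)).comp v this
    have h2 := (hode v hv).mul h1
    have heq : (-(x v) / T) * exp ((v - s) / T) + x v * (exp ((v - s) / T) * (1 / T)) = 0 := by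
      field_simp
      ring
    rw [heq] at h2
    exact h2
  have hgconst : ∀ t, s < t → g t = xk := by
    intro t ht
    have key : ∀ u, u ∈ Ioc s t → g u = g t := by
      intro u hu
      have hconst := constant_of_has_deriv_right_zero (f := g) (a := u) (b := t)
        (by
          apply ContinuousOn.mul
          · exact hcont.mono (fun z hz => le_trans (le_of_lt hu.1) hz.1)
          · exact (Real.continuous_exp.comp (by fun_prop)).continuousOn)
        (fun v hv => (hgderiv v (lt_of_lt_of_le hu.1 hv.1)).hasDerivWithinAt)
      have := hconst t (by constructor <;> [exact hu.2; exact le_refl t])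
      -- this : g t = g u
      linarith [this]
    -- take the limit u → s⁺
    have hcg : Tendsto g (nhdsWithin s (Ioi s)) (nhds (g s)) := by
      have : ContinuousOn g (Ici s) := by
        apply ContinuousOn.mul hcont
        exact (Real.continuous_exp.comp (by fun_prop)).continuousOn
      exact (this s self_mem_Ici).mono_left
        (nhdsWithin_mono s Ioi_subset_Ici_self)
    have hcg' : Tendsto g (nhdsWithin s (Ioi s)) (nhds (g t)) := by
      apply Tendsto.congr' _ tendsto_const_nhds
      filter_upwards [Ioo_mem_nhdsGT_of_mem (Set.mem_Ico.mpr ⟨le_refl s, ht⟩)] with u hu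
      exact (key u ⟨hu.1, hu.2.le⟩).symm
    have hgs : g s = xk := by simp [hg, hinit]
    have := tendsto_nhds_unique hcg hcg'
    rw [← this, hgs]
  have part1 : ∀ t, s ≤ t → x t = xk * exp (-(t - s) / T) := by
    intro t ht
    rcases eq_or_lt_of_le ht with h | h
    · simp [← h, hinit]
    · have := hgconst t h
      have hepos : exp ((t - s) / T) ≠ 0 := (Real.exp_pos _).ne'
      rw [hg] at this
      have : x t = xk / exp ((t - s) / T) := by
        field_simp at this ⊢
        linarith [this]
      rw [this, neg_div, Real.exp_neg, div_eq_mul_inv]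
  -- the decaying exponential tends to 0
  have hdecay : Tendsto (fun t : ℝ => xk * exp (-(t - s) / T)) atTop (nhds 0) := by
    have h0 : Tendsto (fun t : ℝ => t - s) atTop atTop :=
      tendsto_atTop_add_const_right _ (-s) tendsto_id
    have h1 : Tendsto (fun t : ℝ => -(t - s) / T) atTop atBot :=
      Tendsto.atBot_div_const hT (tendsto_neg_atTop_atBot.comp h0)
    have := (Real.tendsto_exp_atBot).comp h1
    simpa [Function.comp] using this.const_mul xk
  have part2 : Tendsto x atTop (nhds 0) := by
    apply Tendsto.congr' _ hdecay
    filter_upwards [eventually_ge_atTop s] with t ht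
    exact (part1 t ht).symm
  -- the sampled memory values tend to 0
  have hxm : ∀ m : ℕ, x (((k : ℝ) + (m : ℝ) + 1) * T₀) = xk * exp (-(((m : ℝ) + 1) * T₀) / T) := by
    intro m
    have h1 : s ≤ ((k : ℝ) + (m : ℝ) + 1) * T₀ := by
      rw [hs]; nlinarith [Nat.cast_nonneg (α := ℝ) m]
    have := part1 _ h1
    rw [this]
    rw [hs]
    ring_nf
  have hxm0 : Tendsto (fun m : ℕ => x (((k : ℝ) + (m : ℝ) + 1) * T₀)) atTop (nhds 0) := by
    have h0 : Tendsto (fun m : ℕ => ((m : ℝ) + 1) * T₀) atTop atTop :=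
      Tendsto.atTop_mul_const hT₀
        (tendsto_atTop_add_const_right _ 1 tendsto_natCast_atTop_atTop)
    have h1 : Tendsto (fun m : ℕ => -(((m : ℝ) + 1) * T₀) / T) atTop atBot :=
      Tendsto.atBot_div_const hT (tendsto_neg_atTop_atBot.comp h0)
    have h2 := ((Real.tendsto_exp_atBot).comp h1).const_mul xk
    simp only [mul_zero] at h2
    apply Tendsto.congr _ h2
    intro m
    exact (hxm m).symm
  have part3 : ∀ ε : ℝ, 0 < ε → ∃ m : ℕ, a * max 0 (c * A + b) - ε ≤ resp m := by
    intro ε hε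
    have hlt : (0 : ℝ) < ε / a := div_pos hε ha
    obtain ⟨m, hm⟩ := (hxm0.eventually_lt_const hlt).exists
    refine ⟨m, ?_⟩
    rw [hresp m]
    set xm := x (((k : ℝ) + (m : ℝ) + 1) * T₀) with hxmdef
    have hxmpos : 0 < xm := by
      rw [hxmdef, hxm m]; positivity
    have hmax : max 0 (c * A + b) ≤ max 0 (c * A - xm + b) + xm := by
      rcases max_cases 0 (c * A + b) with ⟨h1, h2⟩ | ⟨h1, h2⟩ <;>
      rcases max_cases 0 (c * A - xm + b) with ⟨h3, h4⟩ | ⟨h3, h4⟩ <;> nlinarith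
    have : a * max 0 (c * A + b) ≤ a * max 0 (c * A - xm + b) + a * xm := by
      nlinarith
    have haxm : a * xm ≤ ε := by
      have := (lt_div_iff₀ ha).mp hm
      nlinarith
    linarith
  refine ⟨part1, part2, part3, ?_⟩
  intro hpos hyk
  obtain ⟨m, hm⟩ := part3 ((a * (c * A + b) - yk) / 2) (by linarith)
  refine ⟨m, ?_⟩
  rw [max_eq_right hpos.le] at hm
  linarith
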